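/- Let ψ be an LTL+P formula over Σ = C ∪ U (C controllable, U uncontrollable, disjoint), and let mealy(ψ) be the formula obtained from ψ by replacing every literal u with X u and every literal ¬u with X(¬u), for each u ∈ U. Then the following are equivalent over infinite traces: (1) there exists a Moore strategy t : (2^U)^* → 2^C such that for every 𝒰 = ⟨U0, U1, …⟩ ∈ (2^U)^ω the Controller-first outcome ⟨t(ε) ∪ U0, t(⟨U0⟩) ∪ U1, t(⟨U0,U1⟩) ∪ U2, …⟩ is a model of ψ; (2) there exists a strategy t' : (2^U)^+ → 2^C such that for every 𝒰 ∈ (2^U)^ω the Environment-first outcome res(t',𝒰) = ⟨U0 ∪ t'(⟨U0⟩), U1 ∪ t'(⟨U0,U1⟩), …⟩ is a model of mealy(ψ). -/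

import Mathlib

/-- LTL+P formulas in negation normal form. -/
inductive LTLP (A : Type) : Type where
  | atom : A → LTLP A
  | natom : A → LTLP A
  | and : LTLP A → LTLP A → LTLP A
  | or : LTLP A → LTLP A → LTLP A
  | next : LTLP A → LTLP A            -- X
  | wnext : LTLP A → LTLP A           -- wX
  | until_ : LTLP A → LTLP A → LTLP A -- U
  | release : LTLP A → LTLP A → LTLP A -- R
  | yest : LTLP A → LTLP A            -- Y
  | wyest : LTLP A → LTLP A           -- wY
  | since : LTLP A → LTLP A → LTLP A  -- S
  | trig : LTLP A → LTLP A → LTLP A   -- T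

variable {A : Type}

/-- Satisfaction of an LTL+P formula at position `i` of a finite trace `σ`. -/
def finSat (σ : List (Set A)) : LTLP A → ℕ → Prop
  | .atom p, i => p ∈ σ.getD i ∅
  | .natom p, i => p ∉ σ.getD i ∅
  | .and φ ψ, i => finSat σ φ i ∧ finSat σ ψ i
  | .or φ ψ, i => finSat σ φ i ∨ finSat σ ψ i
  | .next φ, i => i + 1 < σ.length ∧ finSat σ φ (i+1)
  | .wnext φ, i => i + 1 = σ.length ∨ finSat σ φ (i+1)
  | .until_ φ ψ, i => ∃ j, i ≤ j ∧ j < σ.length ∧ finSat σ ψ j ∧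
      ∀ k, i ≤ k → k < j → finSat σ φ k
  | .release φ ψ, i => (∀ j, i ≤ j → j < σ.length → finSat σ ψ j) ∨
      ∃ k, i ≤ k ∧ k < σ.length ∧ finSat σ φ k ∧ ∀ j, i ≤ j → j ≤ k → finSat σ ψ j
  | .yest φ, i => 0 < i ∧ finSat σ φ (i-1)
  | .wyest φ, i => i = 0 ∨ finSat σ φ (i-1)
  | .since φ ψ, i => ∃ j, j ≤ i ∧ finSat σ ψ j ∧ ∀ k, j < k → k ≤ i → finSat σ φ k
  | .trig φ ψ, i => (∀ j, j ≤ i → finSat σ ψ j) ∨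
      ∃ k, k ≤ i ∧ finSat σ φ k ∧ ∀ j, k ≤ j → j ≤ i → finSat σ ψ j

/-- Satisfaction of an LTL+P formula at position `i` of an infinite trace `σ`. -/
def infSat (σ : ℕ → Set A) : LTLP A → ℕ → Prop
  | .atom p, i => p ∈ σ i
  | .natom p, i => p ∉ σ i
  | .and φ ψ, i => infSat σ φ i ∧ infSat σ ψ i
  | .or φ ψ, i => infSat σ φ i ∨ infSat σ ψ i
  | .next φ, i => infSat σ φ (i+1)
  | .wnext φ, i => infSat σ φ (i+1)
  | .until_ φ ψ, i => ∃ j, i ≤ j ∧ infSat σ ψ j ∧ ∀ k, i ≤ k → k < j → infSat σ φ k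
  | .release φ ψ, i => (∀ j, i ≤ j → infSat σ ψ j) ∨
      ∃ k, i ≤ k ∧ infSat σ φ k ∧ ∀ j, i ≤ j → j ≤ k → infSat σ ψ j
  | .yest φ, i => 0 < i ∧ infSat σ φ (i-1)
  | .wyest φ, i => i = 0 ∨ infSat σ φ (i-1)
  | .since φ ψ, i => ∃ j, j ≤ i ∧ infSat σ ψ j ∧ ∀ k, j < k → k ≤ i → infSat σ φ k
  | .trig φ ψ, i => (∀ j, j ≤ i → infSat σ ψ j) ∨
      ∃ k, k ≤ i ∧ infSat σ φ k ∧ ∀ j, k ≤ j → j ≤ i → infSat σ ψ j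

/-- Pure-future formulas: no past operators. -/
def pureFuture : LTLP A → Prop
  | .atom _ | .natom _ => True
  | .and φ ψ | .or φ ψ | .until_ φ ψ | .release φ ψ => pureFuture φ ∧ pureFuture ψ
  | .next φ | .wnext φ => pureFuture φ
  | .yest _ | .wyest _ | .since _ _ | .trig _ _ => False

/-- Pure-past formulas: no future operators. -/
def purePast : LTLP A → Prop
  | .atom _ | .natom _ => True
  | .and φ ψ | .or φ ψ | .since φ ψ | .trig φ ψ => purePast φ ∧ purePast ψ
  | .yest φ | .wyest φ => purePast φ
  | .next _ | .wnext _ | .until_ _ _ | .release _ _ => False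

/-- safetyLTL: pure-future NNF formulas whose only temporal operators are wX and R. -/
def isSafetyLTL : LTLP A → Prop
  | .atom _ | .natom _ => True
  | .and φ ψ | .or φ ψ | .release φ ψ => isSafetyLTL φ ∧ isSafetyLTL ψ
  | .wnext φ => isSafetyLTL φ
  | .next _ | .until_ _ _ | .yest _ | .wyest _ | .since _ _ | .trig _ _ => False

/-- cosafetyLTL: pure-future NNF formulas whose only temporal operators are X and U. -/
def isCosafetyLTL : LTLP A → Prop
  | .atom _ | .natom _ => True
  | .and φ ψ | .or φ ψ | .until_ φ ψ => isCosafetyLTL φ ∧ isCosafetyLTL ψ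
  | .next φ => isCosafetyLTL φ
  | .wnext _ | .release _ _ | .yest _ | .wyest _ | .since _ _ | .trig _ _ => False

/-- ⊥ := p ∧ ¬p (for some proposition letter p). -/
def LTLP.fls (p : A) : LTLP A := .and (.atom p) (.natom p)
/-- ⊤ := p ∨ ¬p (for some proposition letter p). -/
def LTLP.tru (p : A) : LTLP A := .or (.atom p) (.natom p)
/-- G φ := ⊥ R φ. -/
def LTLP.G (p : A) (φ : LTLP A) : LTLP A := .release (LTLP.fls p) φ
/-- F φ := ⊤ U φ. -/
def LTLP.F (p : A) (φ : LTLP A) : LTLP A := .until_ (LTLP.tru p) φ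

/-- Relabelling of proposition letters. -/
def LTLP.map {A B : Type} (h : A → B) : LTLP A → LTLP B
  | .atom p => .atom (h p)
  | .natom p => .natom (h p)
  | .and φ ψ => .and (φ.map h) (ψ.map h)
  | .or φ ψ => .or (φ.map h) (ψ.map h)
  | .next φ => .next (φ.map h)
  | .wnext φ => .wnext (φ.map h)
  | .until_ φ ψ => .until_ (φ.map h) (ψ.map h)
  | .release φ ψ => .release (φ.map h) (ψ.map h)
  | .yest φ => .yest (φ.map h)
  | .wyest φ => .wyest (φ.map h)
  | .since φ ψ => .since (φ.map h) (ψ.map h)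
  | .trig φ ψ => .trig (φ.map h) (ψ.map h)

/-- The translation f over the alphabet extended with the fresh letter `endt`
(encoded as `none`, with letters of Σ encoded as `some p`). -/
def ftr : LTLP A → LTLP (Option A)
  | .atom p => .atom (some p)
  | .natom p => .natom (some p)
  | .and φ ψ => .and (ftr φ) (ftr ψ)
  | .or φ ψ => .or (ftr φ) (ftr ψ)
  | .next φ => .next (.and (.natom none) (ftr φ))
  | .wnext φ => .next (.or (.atom none) (ftr φ))  -- X(¬endt → f φ)
  | .until_ φ ψ => .until_ (ftr φ) (.and (.natom none) (ftr ψ))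
  | .release φ ψ => .or (.until_ (ftr ψ) (.and (ftr ψ) (.next (.atom none))))
      (.until_ (ftr ψ) (.and (ftr φ) (ftr ψ)))
  | .yest φ => .yest (ftr φ)
  | .wyest φ => .wyest (ftr φ)
  | .since φ ψ => .since (ftr φ) (ftr ψ)
  | .trig φ ψ => .trig (ftr φ) (ftr ψ)

/-- g(φ) := ¬endt ∧ f(φ) ∧ ((¬endt) U endt). -/
def gtr (φ : LTLP A) : LTLP (Option A) :=
  .and (.natom none) (.and (ftr φ) (.until_ (.natom none) (.atom none)))

/-- The outcome trace res(s,𝒰) of a (Mealy, Environment-first) strategy. -/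
def resTr {C U : Type} (s : List (Set U) → Set C) (env : ℕ → Set U) : ℕ → Set (C ⊕ U) :=
  fun i => Sum.elim (fun c => c ∈ s ((List.range (i+1)).map env)) (fun u => u ∈ env i)

/-- Realizability over infinite traces. -/
def RealizableInf {C U : Type} (φ : LTLP (C ⊕ U)) : Prop :=
  ∃ s : List (Set U) → Set C, ∀ env : ℕ → Set U, infSat (resTr s env) φ 0

/-- Realizability over finite traces. -/
def RealizableFin {C U : Type} (φ : LTLP (C ⊕ U)) : Prop :=
  ∃ s : List (Set U) → Set C, ∀ env : ℕ → Set U, ∃ k : ℕ,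
    finSat ((List.range (k+1)).map (resTr s env)) φ 0

/-- mealy(ψ): replace every uncontrollable literal `u` (resp. `¬u`) by
`X u` (resp. `X ¬u`). -/
def mealy {C U : Type} : LTLP (C ⊕ U) → LTLP (C ⊕ U)
  | .atom (Sum.inr u) => .next (.atom (Sum.inr u))
  | .natom (Sum.inr u) => .next (.natom (Sum.inr u))
  | .atom (Sum.inl c) => .atom (Sum.inl c)
  | .natom (Sum.inl c) => .natom (Sum.inl c)
  | .and φ ψ => .and (mealy φ) (mealy ψ)
  | .or φ ψ => .or (mealy φ) (mealy ψ)
  | .next φ => .next (mealy φ)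
  | .wnext φ => .wnext (mealy φ)
  | .until_ φ ψ => .until_ (mealy φ) (mealy ψ)
  | .release φ ψ => .release (mealy φ) (mealy ψ)
  | .yest φ => .yest (mealy φ)
  | .wyest φ => .wyest (mealy φ)
  | .since φ ψ => .since (mealy φ) (mealy ψ)
  | .trig φ ψ => .trig (mealy φ) (mealy ψ)

/-- The Controller-first (Moore) outcome: at position `i`, Controller plays
`t(⟨U0,…,U_{i-1}⟩)` (in particular `t(ε)` at position 0). -/
def resMoore {C U : Type} (t : List (Set U) → Set C) (env : ℕ → Set U) :
    ℕ → Set (C ⊕ U) :=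
  fun i => Sum.elim (fun c => c ∈ t ((List.range i).map env)) (fun u => u ∈ env i)

/-- Trace that reads controllables now and uncontrollables one step later. -/
def shiftTr {C U : Type} (σ : ℕ → Set (C ⊕ U)) : ℕ → Set (C ⊕ U) :=
  fun i => Sum.elim (fun c => Sum.inl c ∈ σ i) (fun u => Sum.inr u ∈ σ (i+1))

theorem mealy_iff {C U : Type} (σ : ℕ → Set (C ⊕ U)) (ψ : LTLP (C ⊕ U)) :
    ∀ i, infSat σ (mealy ψ) i ↔ infSat (shiftTr σ) ψ i := by
  induction ψ with
  | atom p => cases p <;> intro i <;> simp [mealy, infSat, shiftTr, Set.Mem, Membership.mem]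
  | natom p => cases p <;> intro i <;> simp [mealy, infSat, shiftTr, Set.Mem, Membership.mem]
  | and φ₁ φ₂ ih1 ih2 => intro i; simp [mealy, infSat, ih1, ih2]
  | or φ₁ φ₂ ih1 ih2 => intro i; simp [mealy, infSat, ih1, ih2]
  | next φ ih => intro i; simp [mealy, infSat, ih]
  | wnext φ ih => intro i; simp [mealy, infSat, ih]
  | until_ φ₁ φ₂ ih1 ih2 => intro i; simp [mealy, infSat, ih1, ih2]
  | release φ₁ φ₂ ih1 ih2 => intro i; simp [mealy, infSat, ih1, ih2]
  | yest φ ih => intro i; simp [mealy, infSat, ih]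
  | wyest φ ih => intro i; simp [mealy, infSat, ih]
  | since φ₁ φ₂ ih1 ih2 => intro i; simp [mealy, infSat, ih1, ih2]
  | trig φ₁ φ₂ ih1 ih2 => intro i; simp [mealy, infSat, ih1, ih2]

/-- Controller wins `ψ` moving first (Moore) iff Controller wins `mealy(ψ)`
moving second (Mealy), over infinite traces. -/
theorem stmt16 {C U : Type} [Fintype C] [Fintype U] (ψ : LTLP (C ⊕ U)) :
    (∃ t : List (Set U) → Set C, ∀ env : ℕ → Set U, infSat (resMoore t env) ψ 0) ↔
      (∃ t' : List (Set U) → Set C, ∀ env : ℕ → Set U,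
        infSat (resTr t' env) (mealy ψ) 0) := by
  constructor
  · rintro ⟨t, ht⟩
    refine ⟨fun l => t l.tail, fun env => ?_⟩
    rw [mealy_iff]
    have e : shiftTr (resTr (fun l => t l.tail) env)
        = resMoore t (fun k => env (k+1)) := by
      funext i x
      cases x with
      | inl c =>
        simp only [shiftTr, resTr, resMoore, Set.Mem, Membership.mem, List.range_succ_eq_map,
          List.map_cons, List.map_map, List.tail_cons, Sum.elim_inl]
        rfl
      | inr u => simp [shiftTr, resTr, resMoore, Set.Mem, Membership.mem]
    rw [e]; exact ht _
  · rintro ⟨t', ht⟩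
    refine ⟨fun l => t' (∅ :: l), fun env => ?_⟩
    have h := ht (fun i => Nat.rec ∅ (fun k _ => env k) i)
    rw [mealy_iff] at h
    have e : shiftTr (resTr t' (fun i => Nat.rec ∅ (fun k _ => env k) i))
        = resMoore (fun l => t' (∅ :: l)) env := by
      funext i x
      cases x with
      | inl c =>
        simp only [shiftTr, resTr, resMoore, Set.Mem, Membership.mem, List.range_succ_eq_map,
          List.map_cons, List.map_map, List.tail_cons, Sum.elim_inl]
        rfl
      | inr u => simp [shiftTr, resTr, resMoore, Set.Mem, Membership.mem]
    rwa [e] at h
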